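/- Define H_s(m,n) = ∑_{t≥0} C(m, nt+s-1) for 1 ≤ s ≤ n, and extend by H_{-(s-1)}(m,n) = H_{n-s+1}(m,n) for 1 ≤ s ≤ n (so indices are read modulo n). Then for all m, s ≥ 0 and 1 ≤ i ≤ n: H_i(m+s, n) = ∑_{j=1}^{n} H_j(s,n) · H_{i-j+1}(m,n). -/

import Mathlib

open Finset

/-- Difference hyperbolic function of order `n`, extended periodically in the index `s`
(period `n`), so that `H_{-(s-1)} = H_{n-s+1}`. For `1 ≤ s ≤ n` it equals
`∑_{t≥0} C(m, nt+s-1)`. -/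
def HfunExt (n m : ℕ) (s : ℤ) : ℤ :=
  ∑ t ∈ Finset.range (m + 1), (Nat.choose m (n * t + ((s - 1).emod n).toNat) : ℤ)

lemma emod_eq_mod (a b : ℤ) : a.emod b = a % b := rfl

/-- Sum of binomial coefficients `C(m,k)` over `k ≡ r (mod n)` in indicator form. -/
def Gfun (n m r : ℕ) : ℤ :=
  ∑ k ∈ Finset.range (m + 1), if k % n = r then (Nat.choose m k : ℤ) else 0

lemma sum_range_mul_aux (f : ℕ → ℤ) (n M : ℕ) :
    ∑ k ∈ range (n * M), f k = ∑ t ∈ range M, ∑ j ∈ range n, f (n * t + j) := by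
  induction M with
  | zero => simp
  | succ M ih =>
      rw [Nat.mul_succ, Finset.sum_range_add, ih, Finset.sum_range_succ]

lemma sum_choose_eq_G (n : ℕ) (hn : 0 < n) (m r : ℕ) (hr : r < n) :
    ∑ t ∈ range (m + 1), (Nat.choose m (n * t + r) : ℤ) = Gfun n m r := by
  have h1 : Gfun n m r
      = ∑ k ∈ range (n * (m + 1)), if k % n = r then (Nat.choose m k : ℤ) else 0 := by
    apply Finset.sum_subset
    · exact Finset.range_subset_range.mpr (Nat.le_mul_of_pos_left _ hn)
    · intro k hk hnk
      simp only [Finset.mem_range, not_lt] at hnk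
      rw [Nat.choose_eq_zero_of_lt hnk]
      simp
  rw [h1, sum_range_mul_aux]
  refine Finset.sum_congr rfl fun t _ => ?_
  have : ∀ j ∈ range n, (if (n * t + j) % n = r then (Nat.choose m (n * t + j) : ℤ) else 0)
      = (if r = j then (Nat.choose m (n * t + j) : ℤ) else 0) := by
    intro j hj
    simp only [Finset.mem_range] at hj
    rw [Nat.mul_add_mod, Nat.mod_eq_of_lt hj]
    rcases eq_or_ne r j with h | h
    · simp [h]
    · simp [h, Ne.symm h]
  rw [Finset.sum_congr rfl this, Finset.sum_ite_eq (range n) r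
    (fun j => (Nat.choose m (n * t + j) : ℤ))]
  simp [Finset.mem_range.mpr hr]

lemma mod_iff_aux (n : ℕ) (hn : 0 < n) (r a b : ℕ) (hr : r < n) :
    b % n = (r + n - a % n) % n ↔ (a + b) % n = r := by
  have hj : a % n < n := Nat.mod_lt _ hn
  have hb : b % n < n := Nat.mod_lt _ hn
  set j := a % n with hjdef
  set b' := b % n with hbdef
  have hab : (a + b) % n = (j + b') % n := by
    rw [Nat.add_mod]
  constructor
  · intro h
    rw [hab, h]
    have h2 : (j + (r + n - j) % n) % n = (j + (r + n - j)) % n := Nat.add_mod_mod _ _ _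
    have h3 : j + (r + n - j) = r + n := by omega
    rw [h2, h3, Nat.add_mod_right, Nat.mod_eq_of_lt hr]
  · intro h
    rw [hab] at h
    by_cases hc : j + b' < n
    · rw [Nat.mod_eq_of_lt hc] at h
      have h4 : r + n - j = b' + n := by omega
      rw [h4, Nat.add_mod_right, Nat.mod_eq_of_lt hb]
    · have hlt : j + b' - n < n := by omega
      have : (j + b') % n = j + b' - n := by
        rw [Nat.mod_eq_sub_mod (by omega), Nat.mod_eq_of_lt hlt]
      rw [this] at h
      have h4 : r + n - j = b' := by omega
      rw [h4, Nat.mod_eq_of_lt hb]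

lemma G_add (n : ℕ) (hn : 0 < n) (m s r : ℕ) (hr : r < n) :
    Gfun n (m + s) r = ∑ j ∈ range n, Gfun n s j * Gfun n m ((r + n - j) % n) := by
  -- step 1 : LHS = sum over product box
  have step1 : Gfun n (m + s) r
      = ∑ p ∈ range (s + 1) ×ˢ range (m + 1),
          (if (p.1 + p.2) % n = r then (Nat.choose s p.1 * Nat.choose m p.2 : ℤ) else 0) := by
    have hmaps : ∀ p ∈ range (s + 1) ×ˢ range (m + 1), p.1 + p.2 ∈ range (m + s + 1) := by
      intro p hp
      simp only [Finset.mem_product, Finset.mem_range] at hp ⊢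
      omega
    rw [← Finset.sum_fiberwise_of_maps_to hmaps]
    unfold Gfun
    refine Finset.sum_congr rfl fun k hk => ?_
    simp only [Finset.mem_range] at hk
    have hsub : Finset.filter (fun p => p.1 + p.2 = k) (range (s + 1) ×ˢ range (m + 1))
        ⊆ Finset.HasAntidiagonal.antidiagonal k := by
      intro p hp
      simp only [Finset.mem_filter] at hp
      simpa [Finset.HasAntidiagonal.mem_antidiagonal] using hp.2
    have hzero : ∀ p ∈ Finset.HasAntidiagonal.antidiagonal k,
        p ∉ Finset.filter (fun p => p.1 + p.2 = k) (range (s + 1) ×ˢ range (m + 1)) →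
        (if (p.1 + p.2) % n = r then (Nat.choose s p.1 * Nat.choose m p.2 : ℤ) else 0) = 0 := by
      intro p hp hnp
      rw [Finset.HasAntidiagonal.mem_antidiagonal] at hp
      have hcase : s + 1 ≤ p.1 ∨ m + 1 ≤ p.2 := by
        by_contra hcon
        push_neg at hcon
        exact hnp (Finset.mem_filter.mpr ⟨Finset.mem_product.mpr
          ⟨Finset.mem_range.mpr hcon.1, Finset.mem_range.mpr hcon.2⟩, hp⟩)
      rcases hcase with h | h
      · rw [Nat.choose_eq_zero_of_lt (show s < p.1 by omega)]; simp
      · rw [Nat.choose_eq_zero_of_lt (show m < p.2 by omega)]; simp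
    rw [Finset.sum_subset hsub hzero]
    have hch : ((m + s).choose k : ℤ)
        = ∑ p ∈ Finset.HasAntidiagonal.antidiagonal k, (Nat.choose s p.1 * Nat.choose m p.2 : ℤ) := by
      rw [show m + s = s + m from Nat.add_comm m s, Nat.add_choose_eq]
      push_cast
      rfl
    have hcong : ∀ p ∈ Finset.HasAntidiagonal.antidiagonal k,
        (if (p.1 + p.2) % n = r then (Nat.choose s p.1 * Nat.choose m p.2 : ℤ) else 0)
        = (if k % n = r then (Nat.choose s p.1 * Nat.choose m p.2 : ℤ) else 0) := by
      intro p hp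
      rw [Finset.HasAntidiagonal.mem_antidiagonal] at hp
      rw [hp]
    rw [Finset.sum_congr rfl hcong]
    by_cases h : k % n = r
    · simp only [h, if_true, hch]
    · simp [h]
  -- step 2 : RHS = same sum
  have step2 : ∑ j ∈ range n, Gfun n s j * Gfun n m ((r + n - j) % n)
      = ∑ p ∈ range (s + 1) ×ˢ range (m + 1),
          (if (p.1 + p.2) % n = r then (Nat.choose s p.1 * Nat.choose m p.2 : ℤ) else 0) := by
    unfold Gfun
    rw [Finset.sum_product]
    have hrw : ∀ j ∈ range n,
        (∑ a ∈ range (s + 1), if a % n = j then (Nat.choose s a : ℤ) else 0) *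
          (∑ b ∈ range (m + 1), if b % n = (r + n - j) % n then (Nat.choose m b : ℤ) else 0)
        = ∑ a ∈ range (s + 1), ∑ b ∈ range (m + 1),
            (if a % n = j then (Nat.choose s a : ℤ) else 0) *
            (if b % n = (r + n - j) % n then (Nat.choose m b : ℤ) else 0) := by
      intro j _
      rw [Finset.sum_mul_sum]
    rw [Finset.sum_congr rfl hrw, Finset.sum_comm]
    refine Finset.sum_congr rfl fun a ha => ?_
    rw [Finset.sum_comm]
    refine Finset.sum_congr rfl fun b hb => ?_
    have hmem : a % n ∈ range n := Finset.mem_range.mpr (Nat.mod_lt _ hn)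
    have hite : ∀ j ∈ range n,
        (if a % n = j then (Nat.choose s a : ℤ) else 0) *
          (if b % n = (r + n - j) % n then (Nat.choose m b : ℤ) else 0)
        = (if a % n = j then
            (Nat.choose s a : ℤ) * (if b % n = (r + n - j) % n then (Nat.choose m b : ℤ) else 0)
          else 0) := by
      intro j _
      by_cases h : a % n = j <;> simp [h]
    rw [Finset.sum_congr rfl hite, Finset.sum_ite_eq (range n) (a % n)
      (fun j => (Nat.choose s a : ℤ) *
        (if b % n = (r + n - j) % n then (Nat.choose m b : ℤ) else 0))]
    simp only [hmem, if_true]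
    have hiff := mod_iff_aux n hn r a b hr
    by_cases h : (a + b) % n = r
    · simp [h, hiff.mpr h]
    · have h' : ¬ (b % n = (r + n - a % n) % n) := fun hc => h (hiff.mp hc)
      simp [h, h']
  rw [step1, step2]

lemma emod_toNat_aux (n r j : ℕ) (hn : 0 < n) (hr : r < n) (hj : j < n) :
    (((r : ℤ) - j) % (n : ℤ)).toNat = (r + n - j) % n := by
  have h1 : (r : ℤ) - j = ((r + n - j : ℕ) : ℤ) - n := by
    have hle : j ≤ r + n := by omega
    push_cast [hle]
    ring
  rw [h1]
  have h2 : (((r + n - j : ℕ) : ℤ) - n) % (n : ℤ) = ((r + n - j : ℕ) : ℤ) % n := by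
    rw [Int.sub_emod, Int.emod_self, sub_zero, Int.emod_emod_of_dvd _ dvd_rfl]
  rw [h2, ← Int.natCast_mod, Int.toNat_natCast]

lemma HfunExt_eq_G (n : ℕ) (hn : 0 < n) (m : ℕ) (s : ℤ) :
    HfunExt n m s = Gfun n m ((s - 1) % (n : ℤ)).toNat := by
  have h1 : 0 ≤ (s - 1) % (n : ℤ) :=
    Int.emod_nonneg _ (by exact_mod_cast hn.ne')
  have h2 : (s - 1) % (n : ℤ) < n :=
    Int.emod_lt_of_pos _ (by exact_mod_cast hn)
  have hr : ((s - 1) % (n : ℤ)).toNat < n := by omega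
  rw [← sum_choose_eq_G n hn m _ hr]
  rfl

theorem Hfun_addition (n : ℕ) (hn : 1 ≤ n) (m s : ℕ) (i : ℤ) (hi1 : 1 ≤ i) (hin : i ≤ n) :
    HfunExt n (m + s) i = ∑ j ∈ Finset.Icc (1 : ℤ) n, HfunExt n s j * HfunExt n m (i - j + 1) := by
  have hn' : 0 < n := hn
  set r : ℕ := (i - 1).toNat with hrdef
  have hri : i - 1 = (r : ℤ) := (Int.toNat_of_nonneg (by omega)).symm
  have hr : r < n := by omega
  -- LHS
  have hL : HfunExt n (m + s) i = Gfun n (m + s) r := by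
    rw [HfunExt_eq_G n hn' (m + s) i, hri, Int.emod_eq_of_lt (by positivity)
      (by exact_mod_cast hr), Int.toNat_natCast]
  -- reindex RHS
  have hIcc : Finset.Icc (1 : ℤ) (n : ℤ)
      = Finset.map ⟨fun k : ℕ => (k : ℤ) + 1, (have h : Function.Injective (fun k : ℕ => (k : ℤ) + 1) := (by intro a b h; simpa using h); h)⟩
        (Finset.range n) := by
    ext x
    simp only [Finset.mem_Icc, Finset.mem_map, Finset.mem_range,
      Function.Embedding.coeFn_mk]
    constructor
    · rintro ⟨hx1, hx2⟩
      exact ⟨(x - 1).toNat, by omega, by omega⟩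
    · rintro ⟨a, ha, rfl⟩
      omega
  rw [hL, hIcc, Finset.sum_map]
  simp only [Function.Embedding.coeFn_mk]
  rw [G_add n hn' m s r hr]
  refine Finset.sum_congr rfl fun j hj => ?_
  simp only [Finset.mem_range] at hj
  have e1 : HfunExt n s ((j : ℤ) + 1) = Gfun n s j := by
    rw [HfunExt_eq_G n hn' s _, add_sub_cancel_right,
      Int.emod_eq_of_lt (by positivity) (by exact_mod_cast hj), Int.toNat_natCast]
  have e2 : HfunExt n m (i - ((j : ℤ) + 1) + 1) = Gfun n m ((r + n - j) % n) := by
    rw [HfunExt_eq_G n hn' m _]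
    have : i - ((j : ℤ) + 1) + 1 - 1 = (r : ℤ) - j := by omega
    rw [this, emod_toNat_aux n r j hn' hr hj]
  rw [e1, e2]
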